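/- Let F : ℝ_{≥0} → ℝ be continuously differentiable and define f : ℝ_{≥0} → ℝ by f(t) = F(t) + t F'(t). Then for d = 3 and all x, y ∈ ℝ³ one has ∫_{S²} f(|⟨ξ, x - y⟩|) dU(ξ) = F(‖x - y‖), where U is the uniform (normalized rotation-invariant) probability measure on the unit sphere S² ⊆ ℝ³. -/

import Mathlib

open MeasureTheory Metric Set Real
open scoped RealInnerProductSpace ENNReal NNReal

local notation "E3" => EuclideanSpace ℝ (Fin 3)
noncomputable section
lemma sphere_gauss (φ : sphere (0:E3) 1 → ℝ) (Φ : E3 → ℝ)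
    (hΦ : ∀ (x : E3) (hx : x ≠ 0),
      Φ x = φ ⟨‖x‖⁻¹ • x, by
        rw [mem_sphere_zero_iff_norm, norm_smul, norm_inv, norm_norm,
          inv_mul_cancel₀ (norm_ne_zero_iff.2 hx)]⟩ * Real.exp (-‖x‖^2)) :
    ∫ x, Φ x = (∫ ξ, φ ξ ∂((volume : Measure E3).toSphere)) *
      ∫ s in Set.Ioi (0:ℝ), s^2 * Real.exp (-s^2) := by
  have hdim : Module.finrank ℝ E3 = 3 := by simp [finrank_euclideanSpace_fin]
  set G : sphere (0:E3) 1 × Ioi (0:ℝ) → ℝ := fun p => φ p.1 * Real.exp (-(p.2:ℝ)^2) with hG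
  calc ∫ x, Φ x
      = ∫ x : ({0}ᶜ : Set E3), Φ x ∂((volume : Measure E3).comap Subtype.val) := by
        rw [integral_subtype_comap (measurableSet_singleton (0:E3)).compl Φ,
          MeasureTheory.restrict_compl_singleton]
    _ = ∫ x : ({0}ᶜ : Set E3), G (homeomorphUnitSphereProd E3 x)
          ∂((volume : Measure E3).comap Subtype.val) := by
        refine integral_congr_ae (Filter.Eventually.of_forall fun x => ?_)
        show Φ x.1 = G _
        rw [hΦ x.1 x.2]
        simp [hG, homeomorphUnitSphereProd, homeomorphSphereProd]
    _ = ∫ p, G p ∂(((volume : Measure E3).toSphere).prod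
          (Measure.volumeIoiPow (Module.finrank ℝ E3 - 1))) :=
        ((volume : Measure E3).measurePreserving_homeomorphUnitSphereProd.integral_comp
          (Homeomorph.measurableEmbedding _) G)
    _ = (∫ ξ, φ ξ ∂((volume : Measure E3).toSphere)) *
          ∫ s : Ioi (0:ℝ), Real.exp (-(s:ℝ)^2) ∂(Measure.volumeIoiPow 2) := by
        rw [hdim]
        exact integral_prod_mul φ (fun s : Ioi (0:ℝ) => Real.exp (-(s:ℝ)^2))
    _ = _ := by
        congr 1
        simp only [Measure.volumeIoiPow, ENNReal.ofReal]
        rw [integral_withDensity_eq_integral_smul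
          ((measurable_subtype_coe.pow_const _).real_toNNReal),
          integral_subtype_comap measurableSet_Ioi
            (fun a : ℝ => Real.toNNReal (a ^ 2) • Real.exp (-a^2))]
        refine setIntegral_congr_fun measurableSet_Ioi fun x hx => ?_
        rw [NNReal.smul_def, Real.coe_toNNReal _ (pow_nonneg hx.out.le _), smul_eq_mul]


-- the Gaussian radial constant
def Cg : ℝ := ∫ s in Set.Ioi (0:ℝ), s^2 * Real.exp (-s^2)

lemma integrable_exp_neg_sq' : Integrable (fun x : ℝ => Real.exp (-x^2)) := by
  simpa using integrable_exp_neg_mul_sq (b := 1) one_pos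

lemma Cg_pos : 0 < Cg := by
  have hint : IntegrableOn (fun s : ℝ => s^2 * Real.exp (-s^2)) (Set.Ioi 0) := by
    have := integrableOn_rpow_mul_exp_neg_mul_sq (b := 1) one_pos (s := 2) (by norm_num)
    refine this.congr_fun (fun x hx => ?_) measurableSet_Ioi
    beta_reduce
    rw [show ((2:ℝ) : ℝ) = ((2:ℕ) : ℝ) by norm_num, Real.rpow_natCast]
    norm_num
  rw [Cg, setIntegral_pos_iff_support_of_nonneg_ae]
  · rw [show (Function.support fun s : ℝ => s^2 * Real.exp (-s^2)) ∩ Set.Ioi 0 = Set.Ioi 0 by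
      refine Set.inter_eq_self_of_subset_right fun s hs => ?_
      have hs' : (0:ℝ) < s := hs
      simp only [Function.mem_support]
      exact (by positivity : (0:ℝ) < s^2 * Real.exp (-s^2)).ne']
    simp [Real.volume_Ioi]
  · refine Filter.Eventually.of_forall fun s => by positivity
  · exact hint

def Ψ (g : ℝ → ℝ) : ℝ × ℝ × ℝ → ℝ := fun p =>
  g (p.1 / Real.sqrt (p.1^2 + (p.2.1^2 + p.2.2^2))) *
    Real.exp (-(p.1^2 + (p.2.1^2 + p.2.2^2)))

lemma abs_div_sqrt_le (t q : ℝ) (hq : 0 ≤ q) : |t / Real.sqrt (t^2 + q)| ≤ 1 := by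
  have h1 : |t| ≤ Real.sqrt (t^2 + q) := by
    rw [← Real.sqrt_sq_eq_abs]
    exact Real.sqrt_le_sqrt (by linarith)
  have h0 : 0 ≤ Real.sqrt (t^2 + q) := Real.sqrt_nonneg _
  rcases eq_or_lt_of_le h0 with h | h
  · rw [← h, div_zero, abs_zero]; norm_num
  · rw [abs_div, abs_of_pos h]
    exact div_le_one_of_le₀ h1 h.le

lemma measurable_Ψ (g : ℝ → ℝ) (hg : Continuous g) : Measurable (Ψ g) := by
  have hq : Measurable fun p : ℝ × ℝ × ℝ => p.1^2 + (p.2.1^2 + p.2.2^2) := by fun_prop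
  exact (hg.measurable.comp (measurable_fst.div (Real.continuous_sqrt.measurable.comp hq))).mul
    (Real.continuous_exp.measurable.comp hq.neg)
end
noncomputable section
section Cart
variable (g : ℝ → ℝ)

lemma exists_bound (hg : Continuous g) : ∃ M : ℝ, ∀ u ∈ Set.Icc (-1:ℝ) 1, |g u| ≤ M := by
  obtain ⟨M, hM⟩ := isCompact_Icc.exists_bound_of_continuousOn
    (Continuous.continuousOn (s := Set.Icc (-1:ℝ) 1) hg)
  exact ⟨M, fun u hu => by simpa [Real.norm_eq_abs] using hM u hu⟩

lemma integrable_Ψ (hg : Continuous g) : Integrable (Ψ g) := by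
  obtain ⟨M, hM⟩ := exists_bound g hg
  have hdom : Integrable (fun p : ℝ × ℝ × ℝ =>
      M * (Real.exp (-p.1^2) * (Real.exp (-p.2.1^2) * Real.exp (-p.2.2^2)))) := by
    have h2 : Integrable (fun z : ℝ × ℝ => Real.exp (-z.1^2) * Real.exp (-z.2^2))
        ((volume : Measure ℝ).prod (volume : Measure ℝ)) :=
      integrable_exp_neg_sq'.mul_prod integrable_exp_neg_sq'
    rw [← Measure.volume_eq_prod] at h2
    have h3 : Integrable (fun p : ℝ × (ℝ × ℝ) =>
        Real.exp (-p.1^2) * (Real.exp (-p.2.1^2) * Real.exp (-p.2.2^2)))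
        ((volume : Measure ℝ).prod (volume : Measure (ℝ × ℝ))) :=
      integrable_exp_neg_sq'.mul_prod h2
    rw [← Measure.volume_eq_prod] at h3
    exact h3.const_mul M
  refine hdom.mono' ((measurable_Ψ g hg).aestronglyMeasurable)
    (Filter.Eventually.of_forall fun p => ?_)
  have hq : (0:ℝ) ≤ p.2.1^2 + p.2.2^2 := by positivity
  have harg := abs_div_sqrt_le p.1 (p.2.1^2 + p.2.2^2) hq
  have hb := hM _ (abs_le.mp harg)
  calc ‖Ψ g p‖ = |g (p.1 / Real.sqrt (p.1^2 + (p.2.1^2 + p.2.2^2)))| *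
        Real.exp (-(p.1^2 + (p.2.1^2 + p.2.2^2))) := by
        rw [Ψ, Real.norm_eq_abs, abs_mul, abs_of_pos (Real.exp_pos _)]
    _ ≤ M * Real.exp (-(p.1^2 + (p.2.1^2 + p.2.2^2))) := by
        apply mul_le_mul_of_nonneg_right hb (Real.exp_pos _).le
    _ = M * (Real.exp (-p.1^2) * (Real.exp (-p.2.1^2) * Real.exp (-p.2.2^2))) := by
        rw [← Real.exp_add, ← Real.exp_add]; ring_nf

end Cart
end
noncomputable section
open scoped Real

def Jf (g : ℝ → ℝ) (t : ℝ) : ℝ :=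
  ∫ s in Set.Ioi (0:ℝ), s * (g (t / Real.sqrt (t^2 + s^2)) * Real.exp (-(t^2 + s^2)))

lemma inner_polar (g : ℝ → ℝ) (t : ℝ) :
    ∫ z : ℝ × ℝ, Ψ g (t, z) = (2*π) * Jf g t := by
  rw [← integral_comp_polarCoord_symm (fun z : ℝ × ℝ => Ψ g (t, z))]
  have key : ∀ p : ℝ × ℝ, p.1 • Ψ g (t, polarCoord.symm p) =
      (fun s => s * (g (t / Real.sqrt (t^2 + s^2)) * Real.exp (-(t^2 + s^2)))) p.1 *
        (fun _ : ℝ => (1:ℝ)) p.2 := by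
    intro p
    have h := Real.sin_sq_add_cos_sq p.2
    have hsq : (p.1 * Real.cos p.2)^2 + (p.1 * Real.sin p.2)^2 = p.1^2 := by nlinarith
    simp only [Ψ, polarCoord_symm_apply, smul_eq_mul]
    rw [hsq]
    ring
  simp_rw [key]
  rw [polarCoord_target, Measure.volume_eq_prod]
  have hsm := setIntegral_prod_mul (μ := (volume : Measure ℝ)) (ν := (volume : Measure ℝ))
    (fun s : ℝ => s * (g (t / Real.sqrt (t^2 + s^2)) * Real.exp (-(t^2 + s^2))))
    (fun _ : ℝ => (1:ℝ)) (Set.Ioi 0) (Set.Ioo (-π) π)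
  rw [hsm]
  have : ∫ _θ in Set.Ioo (-π) π, (1:ℝ) = 2*π := by
    simp [Real.volume_Ioo]
    rw [max_eq_left (by positivity)]
    ring
  rw [this, Jf]
  ring

def f₂ (g : ℝ → ℝ) : ℝ × ℝ → ℝ := fun q =>
  if 0 < q.2 then q.2 * (g (q.1 / Real.sqrt (q.1^2 + q.2^2)) * Real.exp (-(q.1^2 + q.2^2))) else 0

lemma measurable_f₂ (g : ℝ → ℝ) (hg : Continuous g) : Measurable (f₂ g) := by
  have hq : Measurable fun q : ℝ × ℝ => q.1^2 + q.2^2 := by fun_prop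
  exact Measurable.ite (measurableSet_lt measurable_const measurable_snd)
    (measurable_snd.mul ((hg.measurable.comp
      (measurable_fst.div (Real.continuous_sqrt.measurable.comp hq))).mul
      (Real.continuous_exp.measurable.comp hq.neg)))
    measurable_const

lemma integrable_f₂ (g : ℝ → ℝ) (hg : Continuous g) : Integrable (f₂ g) := by
  obtain ⟨M, hM⟩ := exists_bound g hg
  have hM0 : 0 ≤ M := le_trans (abs_nonneg _) (hM 0 (by norm_num))
  have hdom : Integrable (fun q : ℝ × ℝ =>
      M * (Real.exp (-q.1^2) * |q.2 * Real.exp (-q.2^2)|)) := by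
    have h1 : Integrable (fun x : ℝ => |x * Real.exp (-x^2)|) := by
      refine Integrable.abs ?_
      simpa using integrable_mul_exp_neg_mul_sq (b := 1) one_pos
    have h2 := integrable_exp_neg_sq'.mul_prod h1
    rw [← Measure.volume_eq_prod] at h2
    exact h2.const_mul M
  refine hdom.mono' (measurable_f₂ g hg).aestronglyMeasurable
    (Filter.Eventually.of_forall fun q => ?_)
  rw [f₂]
  by_cases hq2 : 0 < q.2
  · simp only [if_pos hq2]
    have harg := abs_div_sqrt_le q.1 (q.2^2) (sq_nonneg _)
    have hb := hM _ (abs_le.mp harg)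
    have : ‖q.2 * (g (q.1 / Real.sqrt (q.1^2 + q.2^2)) * Real.exp (-(q.1^2 + q.2^2)))‖
        = |g (q.1 / Real.sqrt (q.1^2 + q.2^2))| * (|q.2| * Real.exp (-(q.1^2 + q.2^2))) := by
      rw [Real.norm_eq_abs, abs_mul, abs_mul, abs_of_pos (Real.exp_pos _)]
      ring
    rw [this]
    have hexp : Real.exp (-(q.1^2 + q.2^2)) = Real.exp (-q.1^2) * Real.exp (-q.2^2) := by
      rw [← Real.exp_add]; ring_nf
    calc |g (q.1 / Real.sqrt (q.1^2 + q.2^2))| * (|q.2| * Real.exp (-(q.1^2 + q.2^2)))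
        ≤ M * (|q.2| * Real.exp (-(q.1^2 + q.2^2))) := by
          apply mul_le_mul_of_nonneg_right hb (by positivity)
      _ = M * (Real.exp (-q.1^2) * |q.2 * Real.exp (-q.2^2)|) := by
          rw [hexp, abs_mul, abs_of_pos (Real.exp_pos _)]
          ring
  · simp only [if_neg hq2, norm_zero]
    positivity
end
noncomputable section
open scoped Real

lemma integral_f₂_eq_J (g : ℝ → ℝ) (hg : Continuous g) :
    ∫ q : ℝ × ℝ, f₂ g q = ∫ t : ℝ, Jf g t := by
  rw [Measure.volume_eq_prod,
    integral_prod _ (by rw [← Measure.volume_eq_prod]; exact integrable_f₂ g hg)]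
  refine integral_congr_ae (Filter.Eventually.of_forall fun t => ?_)
  have hind : ∀ s : ℝ, f₂ g (t, s) = Set.indicator (Set.Ioi 0)
      (fun s => s * (g (t / Real.sqrt (t^2 + s^2)) * Real.exp (-(t^2 + s^2)))) s := fun s => by
    simp [f₂, Set.indicator_apply, Set.mem_Ioi]
  simp_rw [hind]
  rw [integral_indicator measurableSet_Ioi]
  rfl

lemma integral_f₂_eq_W (g : ℝ → ℝ) (hg : Continuous g) :
    ∫ q : ℝ × ℝ, f₂ g q = Cg * ∫ u in (-1:ℝ)..1, g u := by
  rw [← integral_comp_polarCoord_symm (f₂ g), polarCoord_target]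
  have key : ∀ p ∈ Set.Ioi (0:ℝ) ×ˢ Set.Ioo (-π) π,
      p.1 • f₂ g (polarCoord.symm p) =
      (fun s => s^2 * Real.exp (-s^2)) p.1 *
        (fun θ => (if 0 < Real.sin θ then Real.sin θ else 0) * g (Real.cos θ)) p.2 := by
    rintro ⟨s, θ⟩ hp
    obtain ⟨hs, hθ⟩ := hp
    have hs : (0:ℝ) < s := hs
    have h := Real.sin_sq_add_cos_sq θ
    have hsq : (s * Real.cos θ)^2 + (s * Real.sin θ)^2 = s^2 := by nlinarith
    simp only [f₂, polarCoord_symm_apply, smul_eq_mul]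
    rw [hsq, Real.sqrt_sq hs.le]
    by_cases hsin : 0 < Real.sin θ
    · rw [if_pos (mul_pos hs hsin), if_pos hsin, mul_div_cancel_left₀ _ hs.ne']
      ring
    · have hnp : ¬ (0 < s * Real.sin θ) :=
        not_lt.mpr (mul_nonpos_iff.mpr (Or.inl ⟨hs.le, not_lt.mp hsin⟩))
      rw [if_neg hnp, if_neg hsin]
      ring
  rw [setIntegral_congr_fun (measurableSet_Ioi.prod measurableSet_Ioo) key,
    Measure.volume_eq_prod]
  have hsm := setIntegral_prod_mul (μ := (volume : Measure ℝ)) (ν := (volume : Measure ℝ))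
    (fun s : ℝ => s^2 * Real.exp (-s^2))
    (fun θ => (if 0 < Real.sin θ then Real.sin θ else 0) * g (Real.cos θ))
    (Set.Ioi 0) (Set.Ioo (-π) π)
  rw [hsm]
  have hW : (∫ θ in Set.Ioo (-π) π,
      (if 0 < Real.sin θ then Real.sin θ else 0) * g (Real.cos θ)) = ∫ u in (-1:ℝ)..1, g u := by
    have h1 : Set.EqOn (fun θ => (if 0 < Real.sin θ then Real.sin θ else 0) * g (Real.cos θ))
        (fun θ => Set.indicator (Set.Ioo 0 π) (fun θ => Real.sin θ * g (Real.cos θ)) θ)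
        (Set.Ioo (-π) π) := by
      intro θ hθ
      by_cases h : θ ∈ Set.Ioo 0 π
      · simp only [Set.indicator_of_mem h]
        rw [if_pos (Real.sin_pos_of_pos_of_lt_pi h.1 h.2)]
      · simp only [Set.indicator_of_notMem h]
        have hθ0 : θ ≤ 0 := by
          by_contra hc
          push_neg at hc
          exact h ⟨hc, hθ.2⟩
        have hsin : Real.sin θ ≤ 0 := by
          have h2 := Real.sin_nonneg_of_nonneg_of_le_pi (x := -θ) (by linarith)
            (by linarith [hθ.1])
          rw [Real.sin_neg] at h2
          linarith
        rw [if_neg (not_lt.mpr hsin), zero_mul]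
    rw [setIntegral_congr_fun measurableSet_Ioo h1,
      setIntegral_indicator measurableSet_Ioo,
      Set.inter_eq_self_of_subset_right
        (Set.Ioo_subset_Ioo (by linarith [Real.pi_pos]) le_rfl),
      ← integral_Ioc_eq_integral_Ioo, ← intervalIntegral.integral_of_le Real.pi_pos.le]
    have hsub := intervalIntegral.integral_comp_smul_deriv (f := Real.cos)
      (f' := fun x => -Real.sin x) (g := g) (a := 0) (b := π)
      (fun x _ => Real.hasDerivAt_cos x) (Real.continuous_sin.neg.continuousOn) hg
    simp only [Real.cos_zero, Real.cos_pi, smul_eq_mul, Function.comp] at hsub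
    have h2 : ∫ x in (0:ℝ)..π, Real.sin x * g (Real.cos x)
        = -∫ x in (0:ℝ)..π, -Real.sin x * g (Real.cos x) := by
      rw [← intervalIntegral.integral_neg]
      apply intervalIntegral.integral_congr
      intro x _
      ring
    rw [h2, hsub, intervalIntegral.integral_symm]
    ring
  rw [hW]
  rfl
end
noncomputable section
open scoped Real

lemma cart_eq (g : ℝ → ℝ) (hg : Continuous g) :
    ∫ p : ℝ × ℝ × ℝ, Ψ g p = (2*π) * (Cg * ∫ u in (-1:ℝ)..1, g u) := by
  rw [Measure.volume_eq_prod,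
    integral_prod _ (by rw [← Measure.volume_eq_prod]; exact integrable_Ψ g hg)]
  calc (∫ t : ℝ, ∫ z : ℝ × ℝ, Ψ g (t, z))
      = ∫ t : ℝ, (2*π) * Jf g t :=
        integral_congr_ae (Filter.Eventually.of_forall fun t => inner_polar g t)
    _ = (2*π) * ∫ t : ℝ, Jf g t := integral_const_mul _ _
    _ = (2*π) * ∫ q : ℝ × ℝ, f₂ g q := by rw [integral_f₂_eq_J g hg]
    _ = (2*π) * (Cg * ∫ u in (-1:ℝ)..1, g u) := by rw [integral_f₂_eq_W g hg]
end
noncomputable section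
open scoped Real

def ψeq : EuclideanSpace ℝ (Fin 3) ≃ᵐ ℝ × ℝ × ℝ :=
  (MeasurableEquiv.toLp 2 (Fin 3 → ℝ)).symm.trans
    ((MeasurableEquiv.piFinSuccAbove (fun _ : Fin 3 => ℝ) 0).trans
      ((MeasurableEquiv.refl ℝ).prodCongr MeasurableEquiv.finTwoArrow))

lemma ψeq_apply (x : E3) : ψeq x = (x 0, x 1, x 2) := rfl

lemma ψeq_mp : MeasurePreserving ψeq (volume : Measure E3) volume := by
  have h1 := EuclideanSpace.volume_preserving_symm_measurableEquiv_toLp (Fin 3)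
  have h2 := volume_preserving_piFinSuccAbove (fun _ : Fin 3 => ℝ) 0
  have h3 : MeasurePreserving ((MeasurableEquiv.refl ℝ).prodCongr MeasurableEquiv.finTwoArrow)
      (volume : Measure (ℝ × (Fin 2 → ℝ))) volume := by
    rw [Measure.volume_eq_prod, Measure.volume_eq_prod]
    exact (MeasurePreserving.id volume).prod (volume_preserving_finTwoArrow ℝ)
  exact (h3.comp (h2.comp h1))
end
noncomputable section
open scoped Real

lemma sphere_eq (g : ℝ → ℝ) (hg : Continuous g) (v : E3) (hv : v ≠ 0) :
    (∫ ξ : sphere (0:E3) 1, g ⟪(ξ : E3), v⟫ ∂((volume : Measure E3).toSphere))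
      = (2*π) * ∫ u in (-1:ℝ)..1, g (‖v‖ * u) := by
  have hr0 : 0 < ‖v‖ := norm_pos_iff.mpr hv
  set r : ℝ := ‖v‖ with hrdef
  set g' : ℝ → ℝ := fun u => g (r * u) with hg'def
  have hg'c : Continuous g' := hg.comp (continuous_const.mul continuous_id)
  set Φ : E3 → ℝ := fun x => g (⟪x, v⟫ / ‖x‖) * Real.exp (-‖x‖^2) with hΦdef
  have hLHS : ∫ x, Φ x =
      (∫ ξ : sphere (0:E3) 1, g ⟪(ξ : E3), v⟫ ∂((volume : Measure E3).toSphere)) * Cg := by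
    exact sphere_gauss (fun ξ => g ⟪(ξ : E3), v⟫) Φ (fun x hx => by
      simp only [hΦdef]
      rw [real_inner_smul_left, div_eq_inv_mul])
  -- isometry sending `v` to `r • single 0 1`
  have hnorm_single : ‖r • EuclideanSpace.single (0 : Fin 3) (1:ℝ)‖ = r := by
    rw [norm_smul, EuclideanSpace.norm_single]
    simp [abs_of_pos hr0]
  set e := Submodule.reflection (ℝ ∙ (v - r • EuclideanSpace.single (0 : Fin 3) (1:ℝ)))ᗮ with hedef
  have he : e v = r • EuclideanSpace.single (0 : Fin 3) (1:ℝ) :=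
    Submodule.reflection_sub (by rw [hnorm_single])
  have hmp : ∫ y, Φ (e.symm y) = ∫ x, Φ x :=
    (e.symm.measurePreserving).integral_comp e.symm.toHomeomorph.measurableEmbedding Φ
  have hcompose : ∀ y : E3, Φ (e.symm y) = Ψ g' (ψeq y) := by
    intro y
    have hinner : ⟪e.symm y, v⟫ = r * y 0 := by
      have h1 : ⟪e.symm y, v⟫ = ⟪e (e.symm y), e v⟫ := (e.inner_map_map _ _).symm
      rw [h1, e.apply_symm_apply, he, real_inner_smul_right]
      congr 1
      have := EuclideanSpace.inner_single_right (𝕜 := ℝ) (0 : Fin 3) (1:ℝ) y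
      simpa using this
    have hnorm : ‖y‖ = Real.sqrt (y 0 ^ 2 + (y 1 ^ 2 + y 2 ^ 2)) := by
      rw [EuclideanSpace.norm_eq, Fin.sum_univ_three]
      congr 1
      simp [Real.norm_eq_abs, sq_abs]
      ring
    have hnormsq : ‖y‖^2 = y 0 ^ 2 + (y 1 ^ 2 + y 2 ^ 2) := by
      rw [hnorm, Real.sq_sqrt (by positivity)]
    simp only [hΦdef, Ψ, ψeq_apply]
    rw [e.symm.norm_map, hinner, hnormsq, ← hnorm, mul_div_assoc]
  have hRHS : ∫ x, Φ x = (2*π) * (Cg * ∫ u in (-1:ℝ)..1, g' u) := by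
    rw [← hmp]
    calc ∫ y, Φ (e.symm y) = ∫ y, Ψ g' (ψeq y) :=
          integral_congr_ae (Filter.Eventually.of_forall fun y => hcompose y)
      _ = ∫ p, Ψ g' p := ψeq_mp.integral_comp ψeq.measurableEmbedding (Ψ g')
      _ = (2*π) * (Cg * ∫ u in (-1:ℝ)..1, g' u) := cart_eq g' hg'c
  have := hLHS.symm.trans hRHS
  have hfinal : (∫ ξ : sphere (0:E3) 1, g ⟪(ξ : E3), v⟫ ∂((volume : Measure E3).toSphere)) * Cg
      = ((2*π) * ∫ u in (-1:ℝ)..1, g' u) * Cg := by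
    rw [this]; ring
  exact mul_right_cancel₀ Cg_pos.ne' hfinal
end
noncomputable section
open scoped Real


lemma toSphere_univ_toReal :
    (((volume : Measure E3).toSphere) Set.univ).toReal = 4*π := by
  have hsingle : (EuclideanSpace.single (0 : Fin 3) (1:ℝ)) ≠ 0 := by
    intro h
    have := EuclideanSpace.norm_single (𝕜 := ℝ) (0 : Fin 3) (1:ℝ)
    rw [h] at this
    simp at this
  have h := sphere_eq (fun _ => (1:ℝ)) continuous_const _ hsingle
  rw [integral_const] at h
  simp only [intervalIntegral.integral_const, smul_eq_mul, mul_one] at h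
  rw [← measureReal_def, h]
  ring


open MeasureTheory Metric
open scoped RealInnerProductSpace

/-- The uniform (normalized rotation-invariant) probability measure on the unit sphere
`S^{d-1} ⊆ ℝ^d`, obtained by normalizing the surface measure. -/
noncomputable def uniformSphere (d : ℕ) :
    Measure (sphere (0 : EuclideanSpace ℝ (Fin d)) 1) :=
  ((volume : Measure (EuclideanSpace ℝ (Fin d))).toSphere Set.univ)⁻¹ •
    (volume : Measure (EuclideanSpace ℝ (Fin d))).toSphere

/-- In dimension `d = 3`, every radial kernel `K(x,y) = F(‖x-y‖)` with continuously
differentiable basis function `F` is the sliced version of the one-dimensional radial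
kernel with basis function `f(t) = F(t) + t F'(t)`. -/
theorem radial_kernel_eq_sliced_dim_three (F F' : ℝ → ℝ)
    (hF : ∀ t ∈ Set.Ici (0 : ℝ), HasDerivWithinAt F (F' t) (Set.Ici 0) t)
    (hF' : ContinuousOn F' (Set.Ici (0 : ℝ)))
    (f : ℝ → ℝ) (hf : ∀ t : ℝ, f t = F t + t * F' t) :
    ∀ x y : EuclideanSpace ℝ (Fin 3),
      (∫ ξ : sphere (0 : EuclideanSpace ℝ (Fin 3)) 1,
        f |⟪(ξ : EuclideanSpace ℝ (Fin 3)), x - y⟫| ∂(uniformSphere 3)) = F ‖x - y‖ := by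
  intro x y
  have hπ : (0:ℝ) < π := Real.pi_pos
  have hFc : ContinuousOn F (Set.Ici 0) := fun t ht => (hF t ht).continuousWithinAt
  have htot := toSphere_univ_toReal
  have hne_top : ((volume : Measure E3).toSphere) Set.univ ≠ ⊤ := measure_ne_top _ _
  set v : E3 := x - y with hvdef
  rcases eq_or_ne v 0 with hv | hv
  · rw [hv]
    have : ∀ ξ : sphere (0:E3) 1, f |⟪(ξ : E3), (0:E3)⟫| = f 0 := by
      intro ξ; rw [inner_zero_right, abs_zero]
    rw [integral_congr_ae (Filter.Eventually.of_forall this)]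
    rw [uniformSphere, integral_smul_measure, integral_const, norm_zero, hf 0]
    rw [measureReal_def, ENNReal.toReal_inv, htot]
    simp only [smul_eq_mul]
    field_simp
    ring
  · have hr0 : 0 < ‖v‖ := norm_pos_iff.mpr hv
    set r : ℝ := ‖v‖ with hrdef
    set g : ℝ → ℝ := fun u => f |u| with hgdef
    have hgc : Continuous g := by
      have habs : ∀ u : ℝ, |u| ∈ Set.Ici (0:ℝ) := fun u => abs_nonneg u
      have h1 : Continuous fun u : ℝ => F |u| := hFc.comp_continuous continuous_abs habs
      have h2 : Continuous fun u : ℝ => F' |u| := hF'.comp_continuous continuous_abs habs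
      have : g = fun u : ℝ => F |u| + |u| * F' |u| := funext fun u => hf _
      rw [this]
      exact h1.add (continuous_abs.mul h2)
    have hS : (∫ ξ : sphere (0:E3) 1, f |⟪(ξ : E3), v⟫| ∂((volume : Measure E3).toSphere))
        = (2*π) * ∫ u in (-1:ℝ)..1, g (r * u) := sphere_eq g hgc v hv
    rw [uniformSphere, integral_smul_measure, hS, ENNReal.toReal_inv, htot]
    -- now the 1-d computation
    have hInt : ∀ a b : ℝ, IntervalIntegrable (fun u => g (r*u)) volume a b := fun a b =>
      (hgc.comp (continuous_const.mul continuous_id)).intervalIntegrable a b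
    have hodd : ∫ u in (-1:ℝ)..0, g (r*u) = ∫ u in (0:ℝ)..1, g (r*u) := by
      have hneg := intervalIntegral.integral_comp_neg (a := (0:ℝ)) (b := 1)
        (f := fun u => g (r*u))
      simp only [neg_zero] at hneg
      rw [← hneg]
      refine intervalIntegral.integral_congr fun u _ => ?_
      simp only [hgdef, mul_neg, abs_neg]
    have h1 : ∫ u in (-1:ℝ)..1, g (r * u) = 2 * ∫ u in (0:ℝ)..1, g (r*u) := by
      rw [← intervalIntegral.integral_add_adjacent_intervals (hInt (-1) 0) (hInt 0 1), hodd]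
      ring
    have h2 : ∫ u in (0:ℝ)..1, g (r*u) = r⁻¹ * ∫ s in (0:ℝ)..r, g s := by
      rw [intervalIntegral.integral_comp_mul_left (fun s => g s) hr0.ne']
      simp
    have h3 : ∫ s in (0:ℝ)..r, g s = ∫ s in (0:ℝ)..r, (F s + s * F' s) := by
      refine intervalIntegral.integral_congr fun s hs => ?_
      rw [Set.uIcc_of_le hr0.le] at hs
      simp only [hgdef]
      rw [abs_of_nonneg hs.1, hf s]
    have h4 : ∫ s in (0:ℝ)..r, (F s + s * F' s) = r * F r := by
      have hderiv : ∀ s ∈ Set.Ioo (0:ℝ) r, HasDerivWithinAt (fun t => t * F t)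
          (F s + s * F' s) (Set.Ioi s) s := by
        intro s hs
        have hFs : HasDerivAt F (F' s) s :=
          (hF s (le_of_lt hs.1)).hasDerivAt (Ici_mem_nhds hs.1)
        have := (hasDerivAt_id s).mul hFs
        simp only [one_mul, id] at this
        exact (this.congr_deriv (by ring)).hasDerivWithinAt
      have hcont : ContinuousOn (fun t => t * F t) (Set.Icc 0 r) :=
        continuousOn_id.mul (hFc.mono (Set.Icc_subset_Ici_self))
      have hint : IntervalIntegrable (fun s => F s + s * F' s) volume 0 r := by
        have hsub : Set.uIcc (0:ℝ) r ⊆ Set.Ici 0 := by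
          rw [Set.uIcc_of_le hr0.le]; exact Set.Icc_subset_Ici_self
        exact ContinuousOn.intervalIntegrable
          (((hFc.mono hsub).add (continuousOn_id.mul (hF'.mono hsub))))
      have := intervalIntegral.integral_eq_sub_of_hasDeriv_right_of_le hr0.le hcont hderiv hint
      rw [this]
      ring
    rw [h1, h2, h3, h4]
    simp only [smul_eq_mul]
    field_simp
    ring
end
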